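/- Let G be a group and B : G → G a group Rota–Baxter operator such that for all g, h ∈ G either (B(g)B(h) = B(B(g)h) and B(gB(h)) = B(gh)) or (B(g)B(h) = B(gB(h)) and B(B(g)h) = B(gh)). Then B is idempotent: B(B(g)) = B(g) for all g ∈ G. -/

import Mathlib

/-- A GA–Rota–Baxter operator on a group is idempotent. -/
theorem stmt_4 {G : Type*} [Group G] (B : G → G)
    (hB : ∀ g h : G, B g * B h = B (g * B g * h * (B g)⁻¹))
    (hGA : ∀ g h : G,
      (B g * B h = B (B g * h) ∧ B (g * B h) = B (g * h)) ∨
      (B g * B h = B (g * B h) ∧ B (B g * h) = B (g * h))) :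
    ∀ g : G, B (B g) = B g := by
  have h1 : B 1 = 1 := by
    have h := hB 1 1
    simp only [one_mul, mul_one, mul_inv_cancel_right, mul_inv_cancel] at h
    exact mul_eq_right.mp h
  intro g
  rcases hGA g 1 with ⟨h2, _⟩ | ⟨_, h2⟩
  · simp only [h1, mul_one] at h2
    exact h2.symm
  · simpa using h2
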